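/- For every d ≥ 0, ∫ min((m − x)², (m + d − x)²) dγ(x) = σ² + d²/2 − d · [ (d/2)(2Φ(d/(2σ)) − 1) + 2σ φ(d/(2σ)) ]. -/

import Mathlib

open MeasureTheory ProbabilityTheory Real Filter Set

/-- The standard normal probability density function. -/
noncomputable def stdGaussianPDF (x : ℝ) : ℝ :=
  Real.exp (-x ^ 2 / 2) / Real.sqrt (2 * Real.pi)

/-- The standard normal cumulative distribution function. -/
noncomputable def stdGaussianCDF (x : ℝ) : ℝ :=
  ∫ t in Set.Iic x, stdGaussianPDF t

lemma sqrt2pi_pos : 0 < Real.sqrt (2 * Real.pi) := Real.sqrt_pos.2 (by positivity)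

lemma stdPDF_nonneg (x : ℝ) : 0 ≤ stdGaussianPDF x :=
  div_nonneg (Real.exp_pos _).le sqrt2pi_pos.le

lemma stdPDF_eq (x : ℝ) : gaussianPDFReal 0 1 x = stdGaussianPDF x := by
  simp [gaussianPDFReal, stdGaussianPDF, div_eq_inv_mul, mul_comm]

lemma stdPDF_continuous : Continuous stdGaussianPDF := by
  unfold stdGaussianPDF
  fun_prop

lemma stdPDF_integrable : Integrable stdGaussianPDF := by
  have := integrable_gaussianPDFReal 0 1
  simpa [funext stdPDF_eq] using this

lemma stdPDF_integral : ∫ x, stdGaussianPDF x = 1 := by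
  have := integral_gaussianPDFReal_eq_one 0 (one_ne_zero)
  simpa [funext stdPDF_eq] using this

lemma stdPDF_as_exp (x : ℝ) :
    stdGaussianPDF x = Real.exp (-(1/2 : ℝ) * x ^ 2) * (Real.sqrt (2 * Real.pi))⁻¹ := by
  rw [stdGaussianPDF, div_eq_mul_inv]
  ring_nf

lemma id_mul_stdPDF_integrable : Integrable (fun x : ℝ => x * stdGaussianPDF x) := by
  have h := (integrable_mul_exp_neg_mul_sq (b := 1/2) (by norm_num)).mul_const
    (Real.sqrt (2 * Real.pi))⁻¹
  refine h.congr (ae_of_all _ fun x => ?_)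
  simp only [stdPDF_as_exp]; ring

lemma sq_mul_stdPDF_integrable : Integrable (fun x : ℝ => x ^ 2 * stdGaussianPDF x) := by
  have h := (integrable_rpow_mul_exp_neg_mul_sq (b := 1/2) (by norm_num)
    (s := 2) (by norm_num)).mul_const (Real.sqrt (2 * Real.pi))⁻¹
  refine h.congr (ae_of_all _ fun x => ?_)
  simp only [stdPDF_as_exp, Real.rpow_two]; ring

lemma stdPDF_hasDerivAt (x : ℝ) :
    HasDerivAt stdGaussianPDF (-x * stdGaussianPDF x) x := by
  have h1 : HasDerivAt (fun x : ℝ => -x ^ 2 / 2) (-x) x := by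
    refine ((hasDerivAt_pow 2 x).neg.div_const 2).congr_deriv ?_
    norm_num; ring
  have h2 := (h1.exp).div_const (Real.sqrt (2 * Real.pi))
  refine h2.congr_deriv ?_
  rw [stdGaussianPDF]; ring

lemma stdPDF_tendsto : Tendsto stdGaussianPDF atTop (nhds 0) := by
  have h1 : Tendsto (fun x : ℝ => -x ^ 2 / 2) atTop atBot := by
    apply Filter.Tendsto.atBot_div_const (by norm_num : (0:ℝ) < 2)
    exact tendsto_neg_atBot_iff.2 (tendsto_pow_atTop two_ne_zero)
  have h2 := (Real.tendsto_exp_atBot.comp h1).div_const (Real.sqrt (2 * Real.pi))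
  rw [zero_div] at h2
  simp only [Function.comp_def] at h2
  exact h2

lemma id_mul_stdPDF_tendsto : Tendsto (fun x => x * stdGaussianPDF x) atTop (nhds 0) := by
  have hg : Tendsto (fun x : ℝ => Real.exp (-(1/2) * x)) atTop (nhds 0) :=
    Real.tendsto_exp_atBot.comp
      (Filter.Tendsto.const_mul_atTop_of_neg (by norm_num) tendsto_id)
  have h := (rpow_mul_exp_neg_mul_sq_isLittleO_exp_neg (b := 1/2) (by norm_num)
    1).tendsto_zero_of_tendsto hg
  have h2 := h.mul_const (Real.sqrt (2 * Real.pi))⁻¹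
  rw [zero_mul] at h2
  refine h2.congr fun x => ?_
  rw [Real.rpow_one, stdPDF_as_exp]; ring

lemma stdCDF_eq_toReal (x : ℝ) :
    stdGaussianCDF x = ((gaussianReal 0 1) (Set.Iic x)).toReal := by
  rw [gaussianReal_apply_eq_integral 0 one_ne_zero,
    ENNReal.toReal_ofReal (integral_nonneg fun t => gaussianPDFReal_nonneg 0 1 t)]
  simp only [funext stdPDF_eq, stdGaussianCDF]

lemma stdCDF_tendsto : Tendsto stdGaussianCDF atTop (nhds 1) := by
  have h := tendsto_measure_Iic_atTop (μ := gaussianReal 0 1)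
  have h2 := (ENNReal.tendsto_toReal (by simp : (gaussianReal 0 1) Set.univ ≠ ⊤)).comp h
  simp only [measure_univ, ENNReal.toReal_one] at h2
  refine h2.congr fun x => (stdCDF_eq_toReal x).symm

lemma stdCDF_hasDerivAt (x : ℝ) : HasDerivAt stdGaussianCDF (stdGaussianPDF x) x := by
  have hfun : stdGaussianCDF = fun y => stdGaussianCDF 0 + ∫ t in (0:ℝ)..y, stdGaussianPDF t := by
    funext y
    rw [← intervalIntegral.integral_Iic_sub_Iic stdPDF_integrable.integrableOn
      stdPDF_integrable.integrableOn]
    simp [stdGaussianCDF]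
  have h : HasDerivAt (fun y => ∫ t in (0:ℝ)..y, stdGaussianPDF t) (stdGaussianPDF x) x :=
    intervalIntegral.integral_hasDerivAt_right stdPDF_integrable.intervalIntegrable
      stdPDF_continuous.aestronglyMeasurable.stronglyMeasurableAtFilter
      stdPDF_continuous.continuousAt
  rw [hfun]
  exact h.const_add _

lemma stdCDF_zero : stdGaussianCDF 0 = 1 / 2 := by
  have hsplit := intervalIntegral.integral_Iic_add_Ioi (b := (0:ℝ))
    stdPDF_integrable.integrableOn stdPDF_integrable.integrableOn
  have hneg : ∫ x in Set.Iic (0:ℝ), stdGaussianPDF x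
      = ∫ x in Set.Ioi (0:ℝ), stdGaussianPDF x := by
    have h := integral_comp_neg_Iic (0:ℝ) stdGaussianPDF
    rw [neg_zero] at h
    rw [← h]
    exact setIntegral_congr_fun measurableSet_Iic fun x _ => by simp [stdGaussianPDF]
  rw [stdPDF_integral] at hsplit
  rw [stdGaussianCDF]
  linarith

lemma integral_sq_mul_stdPDF : ∫ x, x ^ 2 * stdGaussianPDF x = 1 := by
  have hIoi : ∫ x in Set.Ioi (0:ℝ), x ^ 2 * stdGaussianPDF x = 1 / 2 := by
    have hderiv : ∀ x ∈ Set.Ici (0:ℝ), HasDerivAt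
        (fun y => stdGaussianCDF y - y * stdGaussianPDF y) (x ^ 2 * stdGaussianPDF x) x := by
      intro x _
      have h := (stdCDF_hasDerivAt x).sub ((hasDerivAt_id x).mul (stdPDF_hasDerivAt x))
      refine h.congr_deriv ?_
      simp only [id_eq]; ring
    have htend : Tendsto (fun y => stdGaussianCDF y - y * stdGaussianPDF y) atTop (nhds (1 - 0)) :=
      stdCDF_tendsto.sub id_mul_stdPDF_tendsto
    have h := integral_Ioi_of_hasDerivAt_of_tendsto' hderiv
      sq_mul_stdPDF_integrable.integrableOn htend
    rw [h, stdCDF_zero]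
    norm_num
  have hIic : ∫ x in Set.Iic (0:ℝ), x ^ 2 * stdGaussianPDF x = 1 / 2 := by
    have h := integral_comp_neg_Iic (0:ℝ) (fun x => x ^ 2 * stdGaussianPDF x)
    rw [neg_zero] at h
    rw [← hIoi, ← h]
    exact setIntegral_congr_fun measurableSet_Iic fun x _ => by simp [stdGaussianPDF]
  rw [← intervalIntegral.integral_Iic_add_Ioi (b := (0:ℝ))
    sq_mul_stdPDF_integrable.integrableOn sq_mul_stdPDF_integrable.integrableOn, hIic, hIoi]
  norm_num

lemma max_mul_stdPDF_integrable (t : ℝ) :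
    Integrable (fun x => max 0 (x - t) * stdGaussianPDF x) ∧
    ∫ x, max 0 (x - t) * stdGaussianPDF x
      = stdGaussianPDF t - t * (1 - stdGaussianCDF t) := by
  have hio : IntegrableOn (fun x => (x - t) * stdGaussianPDF x) (Set.Ioi t) := by
    have h : Integrable (fun x => x * stdGaussianPDF x - t * stdGaussianPDF x) :=
      id_mul_stdPDF_integrable.sub (stdPDF_integrable.const_mul t)
    exact (h.congr (ae_of_all _ fun x => by ring)).integrableOn
  have heq : (fun x => max 0 (x - t) * stdGaussianPDF x)
      = Set.indicator (Set.Ioi t) (fun x => (x - t) * stdGaussianPDF x) := by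
    funext x
    by_cases hx : x ∈ Set.Ioi t
    · rw [Set.indicator_of_mem hx, max_eq_right (sub_nonneg.2 (le_of_lt hx))]
    · rw [Set.indicator_of_notMem hx, max_eq_left (sub_nonpos.2 (not_lt.1 hx)), zero_mul]
  constructor
  · rw [heq]
    exact hio.integrable_indicator measurableSet_Ioi
  rw [heq, integral_indicator measurableSet_Ioi]
  have hderiv : ∀ x ∈ Set.Ici t, HasDerivAt
      (fun y => -stdGaussianPDF y - t * stdGaussianCDF y) ((x - t) * stdGaussianPDF x) x := by
    intro x _
    have h := ((stdPDF_hasDerivAt x).neg).sub ((stdCDF_hasDerivAt x).const_mul t)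
    refine h.congr_deriv ?_
    ring
  have htend : Tendsto (fun y => -stdGaussianPDF y - t * stdGaussianCDF y) atTop
      (nhds (-0 - t * 1)) := (stdPDF_tendsto.neg).sub (stdCDF_tendsto.const_mul t)
  have h := integral_Ioi_of_hasDerivAt_of_tendsto' hderiv hio htend
  rw [h]
  ring

lemma integral_stdGaussian (g : ℝ → ℝ) :
    ∫ x, g x ∂(gaussianReal 0 1) = ∫ x, g x * stdGaussianPDF x := by
  rw [gaussianReal_of_var_ne_zero 0 one_ne_zero]
  have hm : Measurable fun x => (gaussianPDFReal 0 1 x).toNNReal :=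
    (measurable_gaussianPDFReal 0 1).real_toNNReal
  have hd : gaussianPDF 0 1 = fun x => ((gaussianPDFReal 0 1 x).toNNReal : ENNReal) := rfl
  rw [hd, integral_withDensity_eq_integral_smul hm]
  refine integral_congr_ae (ae_of_all _ fun x => ?_)
  simp only [NNReal.smul_def]
  rw [Real.coe_toNNReal _ (gaussianPDFReal_nonneg 0 1 x), stdPDF_eq, smul_eq_mul, mul_comm]

/-- For a Gaussian measure `γ` on `ℝ` with mean `m` and variance `σ²`, for every
`d ≥ 0`,
`∫ min((m − x)², (m + d − x)²) dγ
  = σ² + d²/2 − d·[(d/2)(2Φ(d/(2σ)) − 1) + 2σφ(d/(2σ))]`. -/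
theorem gaussian_hierarchical_cost_formula
    (m σ : ℝ) (hσ : 0 < σ)
    (γ : Measure ℝ) (hγ : γ = gaussianReal m ⟨σ ^ 2, sq_nonneg σ⟩)
    (d : ℝ) (hd : 0 ≤ d) :
    ∫ x, min ((m - x) ^ 2) ((m + d - x) ^ 2) ∂γ =
      σ ^ 2 + d ^ 2 / 2 -
        d * ((d / 2) * (2 * stdGaussianCDF (d / (2 * σ)) - 1) +
          2 * σ * stdGaussianPDF (d / (2 * σ))) := by
  have hσ' : σ ≠ 0 := hσ.ne'
  set t := d / (2 * σ) with ht
  have h3 : 2 * d * σ * t = d ^ 2 := by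
    rw [ht]; field_simp
  have hmap : gaussianReal m ⟨σ ^ 2, sq_nonneg σ⟩
      = (gaussianReal 0 1).map (fun z => σ * z + m) := by
    have h1 : (fun z : ℝ => σ * z + m) = (fun z : ℝ => z + m) ∘ (fun z : ℝ => σ * z) := rfl
    rw [h1, ← Measure.map_map (measurable_add_const m) (measurable_const_mul σ),
      gaussianReal_map_const_mul, gaussianReal_map_add_const]
    norm_num
    rfl
  have hfc : Continuous fun x : ℝ => min ((m - x) ^ 2) ((m + d - x) ^ 2) :=
    Continuous.min (by fun_prop) (by fun_prop)
  rw [hγ, hmap, integral_map (by fun_prop) hfc.aestronglyMeasurable, integral_stdGaussian]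
  have hpt : ∀ z : ℝ,
      min ((m - (σ * z + m)) ^ 2) ((m + d - (σ * z + m)) ^ 2) * stdGaussianPDF z
      = σ ^ 2 * (z ^ 2 * stdGaussianPDF z)
        - (2 * d * σ) * (max 0 (z - t) * stdGaussianPDF z) := by
    intro z
    rcases le_total z t with hz | hz
    · have hz' : z * (2 * σ) ≤ d := (le_div_iff₀ (by positivity)).1 (ht ▸ hz)
      have h1 : max 0 (z - t) = 0 := max_eq_left (by linarith)
      have h2 : min ((m - (σ * z + m)) ^ 2) ((m + d - (σ * z + m)) ^ 2)
          = (m - (σ * z + m)) ^ 2 := min_eq_left (by nlinarith)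
      rw [h1, h2]; ring
    · have hz' : d ≤ z * (2 * σ) := (div_le_iff₀ (by positivity)).1 (ht ▸ hz)
      have h1 : max 0 (z - t) = z - t := max_eq_right (by linarith)
      have h2 : min ((m - (σ * z + m)) ^ 2) ((m + d - (σ * z + m)) ^ 2)
          = (m + d - (σ * z + m)) ^ 2 := min_eq_right (by nlinarith)
      rw [h1, h2, ht]
      field_simp
      ring
  rw [integral_congr_ae (ae_of_all _ hpt)]
  rw [integral_sub (sq_mul_stdPDF_integrable.const_mul _)
    (((max_mul_stdPDF_integrable t).1).const_mul _),
    integral_const_mul, integral_const_mul, integral_sq_mul_stdPDF,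
    (max_mul_stdPDF_integrable t).2]
  linear_combination (1 - stdGaussianCDF t) * h3
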